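/- For all real numbers r > 0 and θ > 0, the series ∑_{z=1}^∞ (r)_z / ((r+θ)_z · z) converges and equals ψ(r+θ) − ψ(θ). In particular, the digamma distribution with parameters r, θ is a probability mass function: ∑_{z=1}^∞ digamma(z; r, θ) = 1. -/

import Mathlib

open scoped BigOperators

/-- Rising factorial `(a)_z = a(a+1)⋯(a+z-1)`. -/
noncomputable def risingFac (a : ℝ) (z : ℕ) : ℝ := ∏ i ∈ Finset.range z, (a + i)

/-- Digamma function `ψ(x) = Γ'(x)/Γ(x)`. -/
noncomputable def psi (x : ℝ) : ℝ := deriv Real.Gamma x / Real.Gamma x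

/-- Probability mass function of the digamma distribution (for `z ≥ 1`). -/
noncomputable def digammaPMF (r θ : ℝ) (z : ℕ) : ℝ :=
  (psi (r + θ) - psi θ)⁻¹ * (risingFac r z / (risingFac (r + θ) z * z))

namespace DigammaAux

open Filter Finset Set

lemma risingFac_pos {a : ℝ} (ha : 0 < a) (z : ℕ) : 0 < risingFac a z := by
  unfold risingFac
  exact Finset.prod_pos fun i _ => by positivity

lemma risingFac_succ (a : ℝ) (z : ℕ) :
    risingFac a (z + 1) = risingFac a z * (a + z) := Finset.prod_range_succ _ _

lemma risingFac_succ' (a : ℝ) (z : ℕ) :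
    risingFac a (z + 1) = a * risingFac (a + 1) z := by
  unfold risingFac
  rw [Finset.prod_range_succ']
  simp only [Nat.cast_zero, add_zero, Nat.cast_add, Nat.cast_one]
  rw [mul_comm]
  congr 1
  exact Finset.prod_congr rfl fun i _ => by ring

/-- `A r θ z = (r)_z / (r+θ)_z`. -/
noncomputable def A (r θ : ℝ) (z : ℕ) : ℝ := risingFac r z / risingFac (r + θ) z

/-- `F r θ z = (r)_{z+1} / ((r+θ)_{z+1} (z+1))`, the series terms. -/
noncomputable def F (r θ : ℝ) (z : ℕ) : ℝ :=
  risingFac r (z + 1) / (risingFac (r + θ) (z + 1) * ((z : ℝ) + 1))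

variable {r θ : ℝ} (hr : 0 < r) (hθ : 0 < θ)

include hr hθ

lemma hrθ : 0 < r + θ := by linarith

lemma A_pos (z : ℕ) : 0 < A r θ z :=
  div_pos (risingFac_pos hr z) (risingFac_pos (hrθ hr hθ) z)

lemma F_pos (z : ℕ) : 0 < F r θ z := by
  apply div_pos (risingFac_pos hr _)
  have := risingFac_pos (hrθ hr hθ) (z + 1)
  positivity

lemma F_eq (z : ℕ) : F r θ z = A r θ (z + 1) / ((z : ℝ) + 1) := by
  unfold F A
  rw [div_div]

lemma A_succ (z : ℕ) : A r θ (z + 1) = A r θ z * ((r + z) / (r + θ + z)) := by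
  unfold A
  rw [risingFac_succ, risingFac_succ]
  have h1 := (risingFac_pos (hrθ hr hθ) z).ne'
  have h2 : (0:ℝ) < r + θ + z := by positivity
  field_simp

lemma A_sub_succ (z : ℕ) :
    A r θ z - A r θ (z + 1) = A r θ z * (θ / (r + θ + z)) := by
  rw [A_succ hr hθ]
  have h2 : (0:ℝ) < r + θ + z := by positivity
  field_simp
  ring

lemma A_antitone : Antitone (A r θ) := by
  apply antitone_nat_of_succ_le
  intro z
  have h := A_sub_succ hr hθ z
  have h2 : (0:ℝ) < r + θ + z := by positivity
  nlinarith [A_pos hr hθ z, div_pos hθ h2]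

lemma F_le_tele (z : ℕ) :
    F r θ z ≤ (r + θ + 1) / θ * (A r θ (z + 1) - A r θ (z + 2)) := by
  have h := A_sub_succ hr hθ (z + 1)
  have hz : (0:ℝ) < r + θ + (z + 1 : ℕ) := by positivity
  rw [show z + 2 = (z + 1) + 1 from rfl, h, F_eq hr hθ]
  have hA := (A_pos hr hθ (z + 1)).le
  have key : 1 / ((z : ℝ) + 1) ≤ (r + θ + 1) / θ * (θ / (r + θ + (z + 1 : ℕ))) := by
    rw [div_mul_div_comm, div_le_div_iff₀ (by positivity) (by positivity)]
    push_cast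
    nlinarith [mul_nonneg (mul_nonneg hθ.le (hrθ hr hθ).le) (Nat.cast_nonneg (α := ℝ) z)]
  calc A r θ (z + 1) / ((z : ℝ) + 1) = A r θ (z + 1) * (1 / ((z : ℝ) + 1)) := by ring
    _ ≤ A r θ (z + 1) * ((r + θ + 1) / θ * (θ / (r + θ + (z + 1 : ℕ)))) := by
        exact mul_le_mul_of_nonneg_left key hA
    _ = (r + θ + 1) / θ * (A r θ (z + 1) * (θ / (r + θ + (z + 1 : ℕ)))) := by ring

lemma summable_F : Summable (F r θ) := by
  apply summable_of_sum_range_le (c := (r + θ + 1) / θ * A r θ 1)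
    (fun z => (F_pos hr hθ z).le)
  intro n
  have h1 : ∑ i ∈ Finset.range n, F r θ i
      ≤ ∑ i ∈ Finset.range n, (r + θ + 1) / θ * (A r θ (i + 1) - A r θ (i + 2)) :=
    Finset.sum_le_sum fun i _ => F_le_tele hr hθ i
  have h2 : ∑ i ∈ Finset.range n, (A r θ (i + 1) - A r θ (i + 2))
      = A r θ 1 - A r θ (n + 1) := by
    have := Finset.sum_range_sub' (fun i => A r θ (i + 1)) n
    simpa using this
  rw [← Finset.mul_sum, h2] at h1
  have h3 : (0:ℝ) ≤ (r + θ + 1) / θ := by positivity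
  nlinarith [A_pos hr hθ (n + 1), h1]

lemma tendsto_A_zero : Tendsto (A r θ) atTop (nhds 0) := by
  have hbdd : BddBelow (Set.range (A r θ)) :=
    ⟨0, fun x ⟨z, hz⟩ => hz ▸ (A_pos hr hθ z).le⟩
  have htend := tendsto_atTop_ciInf (A_antitone hr hθ) hbdd
  set L := ⨅ z, A r θ z with hL
  have hL0 : 0 ≤ L := le_ciInf fun z => (A_pos hr hθ z).le
  rcases hL0.eq_or_lt with h | h
  · rwa [← h] at htend
  · exfalso
    have hle : ∀ z, L ≤ A r θ z := fun z => ciInf_le hbdd z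
    have hcomp : ∀ z : ℕ, L * (1 / ((z : ℝ) + 1)) ≤ F r θ z := by
      intro z
      rw [F_eq hr hθ, mul_one_div]
      gcongr
      exact hle _
    have hs1 : Summable (fun z : ℕ => L * (1 / ((z : ℝ) + 1))) :=
      Summable.of_nonneg_of_le (fun z => by positivity) hcomp (summable_F hr hθ)
    have hs2 : Summable (fun z : ℕ => 1 / ((z : ℝ) + 1)) := by
      have := hs1.mul_left L⁻¹
      simpa [← mul_assoc, inv_mul_cancel₀ h.ne'] using this
    have hs3 : Summable (fun z : ℕ => 1 / ((z + 1 : ℕ) : ℝ)) := by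
      convert hs2 using 2 with z
      push_cast
      ring
    exact Real.not_summable_one_div_natCast ((summable_nat_add_iff 1).mp hs3)

lemma hasSum_tele : HasSum (fun z : ℕ => A r θ (z + 1) - A r θ (z + 2)) (A r θ 1) := by
  have hnn : ∀ z : ℕ, 0 ≤ A r θ (z + 1) - A r θ (z + 2) := by
    intro z
    have := A_antitone hr hθ (Nat.le_succ (z + 1))
    linarith
  have hsum : Summable (fun z : ℕ => A r θ (z + 1) - A r θ (z + 2)) := by
    apply summable_of_sum_range_le (c := A r θ 1) hnn
    intro n
    have h2 : ∑ i ∈ Finset.range n, (A r θ (i + 1) - A r θ (i + 2))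
        = A r θ 1 - A r θ (n + 1) := by
      simpa using Finset.sum_range_sub' (fun i => A r θ (i + 1)) n
    rw [h2]
    linarith [A_pos hr hθ (n + 1)]
  have h1 := hsum.hasSum
  have h2 := h1.tendsto_sum_nat
  have h3 : Filter.Tendsto
      (fun n : ℕ => ∑ i ∈ Finset.range n, (A r θ (i + 1) - A r θ (i + 2)))
      atTop (nhds (A r θ 1)) := by
    have heq : ∀ n : ℕ, ∑ i ∈ Finset.range n, (A r θ (i + 1) - A r θ (i + 2))
        = A r θ 1 - A r θ (n + 1) := fun n => by
      simpa using Finset.sum_range_sub' (fun i => A r θ (i + 1)) n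
    simp only [heq]
    have := (tendsto_A_zero hr hθ).comp (tendsto_add_atTop_nat 1)
    simpa using tendsto_const_nhds.sub this
  rwa [tendsto_nhds_unique h2 h3] at h1

lemma A_one : A r θ 1 = r / (r + θ) := by
  unfold A risingFac
  simp

lemma F_sub (z : ℕ) :
    F r θ z - F r (θ + 1) z = 1 / θ * (A r θ (z + 1) - A r θ (z + 2)) := by
  have hB := (risingFac_pos (hrθ hr hθ) (z + 1)).ne'
  have hzc : (0:ℝ) < (z : ℝ) + 1 := by positivity
  have hrθz : (0:ℝ) < r + θ + ((z : ℝ) + 1) := by positivity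
  have e1 : risingFac (r + (θ + 1)) (z + 1) = risingFac (r + θ + 1) (z + 1) := by
    norm_num [add_assoc]
  have e2 : risingFac (r + θ) (z + 2) = (r + θ) * risingFac (r + θ + 1) (z + 1) :=
    risingFac_succ' (r + θ) (z + 1)
  have e3 : risingFac (r + θ) (z + 2) = risingFac (r + θ) (z + 1) * (r + θ + ((z:ℝ) + 1)) := by
    have := risingFac_succ (r + θ) (z + 1)
    rw [this]
    push_cast
    ring
  have e4 : risingFac (r + θ + 1) (z + 1)
      = risingFac (r + θ) (z + 1) * (r + θ + ((z:ℝ) + 1)) / (r + θ) := by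
    rw [← e3, e2]
    field_simp
  have e5 : risingFac r (z + 2) = risingFac r (z + 1) * (r + ((z:ℝ) + 1)) := by
    rw [risingFac_succ r (z + 1)]
    push_cast
    ring
  unfold F A
  rw [e1, e4, e3, e5]
  push_cast
  field_simp
  ring

lemma tsum_F_step :
    (∑' z, F r θ z) - (∑' z, F r (θ + 1) z) = 1 / θ - 1 / (r + θ) := by
  have h1 : HasSum (fun z => F r θ z - F r (θ + 1) z)
      ((∑' z, F r θ z) - (∑' z, F r (θ + 1) z)) :=
    (summable_F hr hθ).hasSum.sub (summable_F hr (by linarith : (0:ℝ) < θ + 1)).hasSum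
  have h2 : HasSum (fun z => F r θ z - F r (θ + 1) z) (1 / θ * A r θ 1) := by
    have := (hasSum_tele hr hθ).mul_left (1 / θ)
    refine this.congr_fun fun z => ?_
    rw [F_sub hr hθ]
  have h3 := h1.unique h2
  rw [h3, A_one hr hθ]
  field_simp
  ring

lemma tsum_F_tele (n : ℕ) :
    (∑' z, F r θ z) - (∑' z, F r (θ + n) z)
      = ∑ k ∈ Finset.range n, (1 / (θ + k) - 1 / (r + θ + k)) := by
  induction n with
  | zero => simp
  | succ n ih =>
    have hθn : (0:ℝ) < θ + n := by positivity
    have hstep := tsum_F_step hr hθn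
    have e : θ + ((n + 1 : ℕ) : ℝ) = θ + (n : ℕ) + 1 := by push_cast; ring
    rw [Finset.sum_range_succ, ← ih, e]
    rw [show r + (θ + (n:ℝ)) = r + θ + (n:ℝ) by ring] at hstep
    push_cast
    linarith [hstep]

lemma risingFac_shift_ge (s : ℝ) (hs : 0 ≤ s) (z : ℕ) :
    (r + θ + s) / (r + θ) * risingFac (r + θ) (z + 1) ≤ risingFac (r + θ + s) (z + 1) := by
  have hrθ' := hrθ hr hθ
  rw [risingFac_succ' (r + θ) z, risingFac_succ' (r + θ + s) z]
  have hprod : risingFac (r + θ + 1) z ≤ risingFac (r + θ + s + 1) z := by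
    unfold risingFac
    apply Finset.prod_le_prod
    · intro i _
      positivity
    · intro i _
      linarith
  calc (r + θ + s) / (r + θ) * ((r + θ) * risingFac (r + θ + 1) z)
      = (r + θ + s) * risingFac (r + θ + 1) z := by
        field_simp
    _ ≤ (r + θ + s) * risingFac (r + θ + s + 1) z := by
        apply mul_le_mul_of_nonneg_left hprod (by linarith)

lemma F_shift_le (s : ℝ) (hs : 0 ≤ s) (z : ℕ) :
    F r (θ + s) z ≤ (r + θ) / (r + θ + s) * F r θ z := by
  have hrθ' := hrθ hr hθ
  have hD := risingFac_pos hrθ' (z + 1)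
  have hDs : (0:ℝ) < risingFac (r + θ + s) (z + 1) := risingFac_pos (by linarith) _
  have hkey := risingFac_shift_ge hr hθ s hs z
  have hN := (risingFac_pos hr (z + 1)).le
  have hz : (0:ℝ) < (z : ℝ) + 1 := by positivity
  unfold F
  rw [show r + (θ + s) = r + θ + s by ring]
  calc risingFac r (z + 1) / (risingFac (r + θ + s) (z + 1) * ((z:ℝ) + 1))
      ≤ risingFac r (z + 1) /
          ((r + θ + s) / (r + θ) * risingFac (r + θ) (z + 1) * ((z:ℝ) + 1)) := by
        have hc : (0:ℝ) < (r + θ + s) / (r + θ) * risingFac (r + θ) (z + 1) * ((z:ℝ) + 1) := by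
          positivity
        apply div_le_div_of_nonneg_left hN hc
        exact mul_le_mul_of_nonneg_right hkey hz.le
    _ = (r + θ) / (r + θ + s) *
          (risingFac r (z + 1) / (risingFac (r + θ) (z + 1) * ((z:ℝ) + 1))) := by
        field_simp

lemma tendsto_tsum_F :
    Filter.Tendsto (fun n : ℕ => ∑' z, F r (θ + n) z) atTop (nhds 0) := by
  have hS := summable_F hr hθ
  have hub : ∀ n : ℕ, (∑' z, F r (θ + n) z) ≤ (r + θ) / (r + θ + n) * ∑' z, F r θ z := by
    intro n
    have hθn : (0:ℝ) < θ + n := by positivity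
    calc (∑' z, F r (θ + n) z)
        ≤ ∑' z, (r + θ) / (r + θ + n) * F r θ z :=
          Summable.tsum_le_tsum (fun z => F_shift_le hr hθ n (Nat.cast_nonneg n) z)
            (summable_F hr hθn) (hS.mul_left _)
      _ = (r + θ) / (r + θ + n) * ∑' z, F r θ z := tsum_mul_left
  have hlb : ∀ n : ℕ, 0 ≤ ∑' z, F r (θ + n) z := by
    intro n
    have hθn : (0:ℝ) < θ + n := by positivity
    exact tsum_nonneg fun z => (F_pos hr hθn z).le
  have hub_t : Filter.Tendsto (fun n : ℕ => (r + θ) / (r + θ + n) * ∑' z, F r θ z)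
      atTop (nhds 0) := by
    have h1 : Filter.Tendsto (fun n : ℕ => r + θ + (n:ℝ)) atTop atTop :=
      tendsto_atTop_add_const_left _ _ tendsto_natCast_atTop_atTop
    have h2 := h1.inv_tendsto_atTop
    have h3 := (h2.const_mul (r + θ)).mul_const (∑' z, F r θ z)
    simpa [div_eq_mul_inv, Function.comp] using h3
  exact tendsto_of_tendsto_of_tendsto_of_le_of_le tendsto_const_nhds hub_t hlb hub

omit hr hθ

lemma psi_add_one {x : ℝ} (hx : 0 < x) : psi (x + 1) = psi x + 1 / x := by
  have hne : ∀ m : ℕ, x ≠ -m := fun m =>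
    ((neg_nonpos.mpr (Nat.cast_nonneg m)).trans_lt hx).ne'
  have hne1 : ∀ m : ℕ, x + 1 ≠ -m := fun m =>
    ((neg_nonpos.mpr (Nat.cast_nonneg m)).trans_lt (by linarith)).ne'
  have hdx : DifferentiableAt ℝ Real.Gamma x := Real.differentiableAt_Gamma hne
  have hdx1 : DifferentiableAt ℝ Real.Gamma (x + 1) := Real.differentiableAt_Gamma hne1
  have h1 : HasDerivAt (fun y => Real.Gamma (y + 1)) (deriv Real.Gamma (x + 1)) x := by
    have := hdx1.hasDerivAt.comp x ((hasDerivAt_id x).add_const 1)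
    simpa [Function.comp_def] using this
  have h2 : HasDerivAt (fun y => y * Real.Gamma y)
      (1 * Real.Gamma x + x * deriv Real.Gamma x) x :=
    (hasDerivAt_id x).mul hdx.hasDerivAt
  have heq : (fun y => Real.Gamma (y + 1)) =ᶠ[nhds x] fun y => y * Real.Gamma y := by
    filter_upwards [eventually_ne_nhds hx.ne'] with y hy
    exact Real.Gamma_add_one hy
  have h3 : HasDerivAt (fun y => Real.Gamma (y + 1))
      (1 * Real.Gamma x + x * deriv Real.Gamma x) x := h2.congr_of_eventuallyEq heq
  have h4 := h1.unique h3
  have hΓ := Real.Gamma_pos_of_pos hx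
  unfold psi
  rw [h4, Real.Gamma_add_one hx.ne']
  field_simp
  ring

lemma psi_add_nat {x : ℝ} (hx : 0 < x) (k : ℕ) :
    psi (x + k) = psi x + ∑ i ∈ Finset.range k, 1 / (x + i) := by
  induction k with
  | zero => simp
  | succ k ih =>
    have e : x + ((k + 1 : ℕ) : ℝ) = (x + k) + 1 := by push_cast; ring
    rw [e, psi_add_one (by positivity), ih, Finset.sum_range_succ]
    ring

lemma psi_le_psi {x y : ℝ} (hx : 0 < x) (hxy : x ≤ y) : psi x ≤ psi y := by
  have hy : 0 < y := lt_of_lt_of_le hx hxy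
  have hdiff : ∀ u ∈ Set.Ioi (0:ℝ), DifferentiableAt ℝ (Real.log ∘ Real.Gamma) u := by
    intro u hu
    have hne : ∀ m : ℕ, u ≠ -m := fun m =>
      ((neg_nonpos.mpr (Nat.cast_nonneg m)).trans_lt hu).ne'
    exact (Real.differentiableAt_Gamma hne).log (Real.Gamma_pos_of_pos hu).ne'
  have hmono := Real.convexOn_log_Gamma.monotoneOn_deriv hdiff
  have hderiv : ∀ u : ℝ, 0 < u → deriv (Real.log ∘ Real.Gamma) u = psi u := by
    intro u hu
    have hne : ∀ m : ℕ, u ≠ -m := fun m =>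
      ((neg_nonpos.mpr (Nat.cast_nonneg m)).trans_lt hu).ne'
    have h := ((Real.differentiableAt_Gamma hne).hasDerivAt).log
      (Real.Gamma_pos_of_pos hu).ne'
    exact h.deriv
  have := hmono (Set.mem_Ioi.mpr hx) (Set.mem_Ioi.mpr hy) hxy
  rwa [hderiv x hx, hderiv y hy] at this

include hr hθ

lemma tendsto_G :
    Filter.Tendsto (fun n : ℕ => psi (r + θ + n) - psi (θ + n)) atTop (nhds 0) := by
  set K := ⌈r⌉₊ with hK
  have hrK : r ≤ K := Nat.le_ceil r
  have hlb : ∀ n : ℕ, 0 ≤ psi (r + θ + n) - psi (θ + n) := by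
    intro n
    have h := psi_le_psi (x := θ + n) (by positivity)
      (by linarith : θ + (n:ℝ) ≤ r + θ + n)
    linarith
  have hub : ∀ n : ℕ, psi (r + θ + n) - psi (θ + n) ≤ (K:ℝ) * (1 / (θ + n)) := by
    intro n
    have hθn : (0:ℝ) < θ + n := by positivity
    have h1 : psi (r + θ + n) ≤ psi ((θ + n) + K) := by
      apply psi_le_psi (by positivity)
      linarith
    have h2 : psi ((θ + (n:ℝ)) + K) = psi (θ + n) + ∑ i ∈ Finset.range K, 1 / (θ + n + i) :=
      psi_add_nat hθn K
    have h3 : ∑ i ∈ Finset.range K, 1 / (θ + (n:ℝ) + i)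
        ≤ ∑ _i ∈ Finset.range K, 1 / (θ + (n:ℝ)) := by
      apply Finset.sum_le_sum
      intro i _
      apply one_div_le_one_div_of_le hθn
      have hi : (0:ℝ) ≤ i := Nat.cast_nonneg i
      linarith
    rw [Finset.sum_const, Finset.card_range, nsmul_eq_mul] at h3
    linarith
  have hub_t : Filter.Tendsto (fun n : ℕ => (K:ℝ) * (1 / (θ + n))) atTop (nhds 0) := by
    have h1 : Filter.Tendsto (fun n : ℕ => θ + (n:ℝ)) atTop atTop :=
      tendsto_atTop_add_const_left _ _ tendsto_natCast_atTop_atTop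
    have h2 := h1.inv_tendsto_atTop
    have h3 := h2.const_mul (K:ℝ)
    simpa [one_div, Function.comp] using h3
  exact tendsto_of_tendsto_of_tendsto_of_le_of_le tendsto_const_nhds hub_t hlb hub


end DigammaAux

theorem stmt_0 (r θ : ℝ) (hr : 0 < r) (hθ : 0 < θ) :
    HasSum (fun z : ℕ => risingFac r (z + 1) / (risingFac (r + θ) (z + 1) * ((z : ℝ) + 1)))
      (psi (r + θ) - psi θ) ∧
    HasSum (fun z : ℕ => digammaPMF r θ (z + 1)) 1 := by
  have hsum := DigammaAux.summable_F hr hθ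
  have key : ∀ n : ℕ, (∑' z, DigammaAux.F r θ z) - (psi (r + θ) - psi θ)
      = (∑' z, DigammaAux.F r (θ + n) z) - (psi (r + θ + n) - psi (θ + n)) := by
    intro n
    have h1 := DigammaAux.tsum_F_tele hr hθ n
    have h2 := DigammaAux.psi_add_nat hθ n
    have h3 := DigammaAux.psi_add_nat (DigammaAux.hrθ hr hθ) n
    have h4 : ∑ k ∈ Finset.range n, (1 / (θ + k) - 1 / (r + θ + k))
        = (∑ k ∈ Finset.range n, 1 / (θ + (k:ℝ)))
          - ∑ k ∈ Finset.range n, 1 / (r + θ + (k:ℝ)) :=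
      Finset.sum_sub_distrib _ _
    rw [h4] at h1
    linarith
  have hzero : Filter.Tendsto (fun n : ℕ =>
      (∑' z, DigammaAux.F r (θ + n) z) - (psi (r + θ + n) - psi (θ + n)))
      Filter.atTop (nhds 0) := by
    simpa using (DigammaAux.tendsto_tsum_F hr hθ).sub (DigammaAux.tendsto_G hr hθ)
  have heq0 : (∑' z, DigammaAux.F r θ z) - (psi (r + θ) - psi θ) = 0 := by
    refine tendsto_nhds_unique (f := fun _ : ℕ =>
      (∑' z, DigammaAux.F r θ z) - (psi (r + θ) - psi θ)) (l := Filter.atTop)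
      tendsto_const_nhds ?_
    have hfe : (fun _ : ℕ => (∑' z, DigammaAux.F r θ z) - (psi (r + θ) - psi θ))
        = fun n : ℕ => (∑' z, DigammaAux.F r (θ + n) z) - (psi (r + θ + n) - psi (θ + n)) :=
      funext key
    rw [hfe]
    exact hzero
  have hval : (∑' z, DigammaAux.F r θ z) = psi (r + θ) - psi θ := by linarith
  have hHS : HasSum (DigammaAux.F r θ) (psi (r + θ) - psi θ) := hval ▸ hsum.hasSum
  refine ⟨hHS, ?_⟩
  have hpos : 0 < psi (r + θ) - psi θ := by
    rw [← hval]
    exact Summable.tsum_pos hsum (fun z => (DigammaAux.F_pos hr hθ z).le) 0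
      (DigammaAux.F_pos hr hθ 0)
  have h := hHS.mul_left (psi (r + θ) - psi θ)⁻¹
  rw [inv_mul_cancel₀ hpos.ne'] at h
  have hfun : (fun z : ℕ => digammaPMF r θ (z + 1))
      = fun z : ℕ => (psi (r + θ) - psi θ)⁻¹ * DigammaAux.F r θ z := by
    funext z
    simp only [digammaPMF, DigammaAux.F]
    push_cast
    ring
  rw [hfun]
  exact h
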